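/- arXiv:1503.02379 — 5 statements merged into one kernel-verified Lean document; each statement's English description precedes it below -/
import Mathlib

section
/- Let g : ℝ → ℂ be integrable and band-limited to f_g > 0, i.e., 𝓕g(ξ) = 0 for all ξ with |ξ| ≥ f_g. Let f > 0 and f_c > 0 satisfy f_c ≤ 2f − f_g. Then the Fourier transform of the double-carrier-frequency term t ↦ g(t)·cos(4πft) vanishes at every frequency ξ with |ξ| < f_c; consequently this term is completely removed by an ideal low-pass filter with cut-off frequency f_c. -/
open Real MeasureTheory

/-- If `g` is integrable and band-limited to `f_g`, and `f_c ≤ 2f − f_g`, then the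
Fourier transform of `t ↦ g(t)·cos(4πft)` vanishes on `(−f_c, f_c)`, so an ideal
low-pass filter with cut-off `f_c` removes this double-carrier-frequency term. -/
theorem fourier_cos_double_carrier_vanishes
    (g : ℝ → ℂ) (hg : Integrable g)
    (f_g f f_c : ℝ) (hfg : 0 < f_g)
    (hband : ∀ ξ : ℝ, f_g ≤ |ξ| → FourierTransform.fourier g ξ = 0)
    (hf : 0 < f) (hfc : 0 < f_c) (hcut : f_c ≤ 2 * f - f_g) :
    ∀ ξ : ℝ, |ξ| < f_c →
      FourierTransform.fourier (fun t => g t * (Real.cos (4 * π * f * t) : ℂ)) ξ = 0 := by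
  intro ξ hξ
  -- integrability of the modulated functions
  have hint : ∀ a : ℝ, Integrable (fun t : ℝ =>
      Complex.exp (↑(-2 * π * t * a) * Complex.I) * g t) := by
    intro a
    apply hg.bdd_mul (c := 1)
    · exact (Complex.continuous_exp.comp
        ((Complex.continuous_ofReal.comp (by continuity)).mul
          continuous_const)).aestronglyMeasurable
    · refine Filter.Eventually.of_forall (fun t => le_of_eq ?_)
      exact Complex.norm_exp_ofReal_mul_I _
  -- the two shifted frequencies are outside the band
  have hz1 : FourierTransform.fourier g (ξ - 2 * f) = 0 := by
    apply hband
    have : f_g ≤ 2 * f - |ξ| := by linarith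
    calc f_g ≤ 2 * f - |ξ| := this
      _ ≤ |2 * f| - |ξ| := by rw [abs_of_pos (by linarith : (0:ℝ) < 2 * f)]
      _ ≤ |ξ - 2 * f| := by
          rw [abs_sub_comm]
          exact le_trans (sub_le_sub_right (le_refl _) _) (abs_sub_abs_le_abs_sub _ _)
  have hz2 : FourierTransform.fourier g (ξ + 2 * f) = 0 := by
    apply hband
    have : f_g ≤ 2 * f - |ξ| := by linarith
    calc f_g ≤ 2 * f - |ξ| := this
      _ ≤ |2 * f| - |ξ| := by rw [abs_of_pos (by linarith : (0:ℝ) < 2 * f)]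
      _ ≤ |ξ + 2 * f| := by
          have h := abs_add_le (ξ + 2 * f) (-ξ)
          rw [abs_neg] at h
          have h2 : ξ + 2 * f + -ξ = 2 * f := by ring
          rw [h2] at h
          linarith
  rw [Real.fourier_real_eq_integral_exp_smul]
  have hpt : ∀ t : ℝ,
      Complex.exp (↑(-2 * π * t * ξ) * Complex.I) • (g t * (Real.cos (4 * π * f * t) : ℂ))
      = (1/2 : ℂ) * (Complex.exp (↑(-2 * π * t * (ξ - 2 * f)) * Complex.I) * g t)
        + (1/2 : ℂ) * (Complex.exp (↑(-2 * π * t * (ξ + 2 * f)) * Complex.I) * g t) := by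
    intro t
    rw [smul_eq_mul, Complex.ofReal_cos, Complex.cos]
    have e1 : Complex.exp (↑(-2 * π * t * ξ) * Complex.I) *
        Complex.exp ((4 * π * f * t : ℝ) * Complex.I)
        = Complex.exp (↑(-2 * π * t * (ξ - 2 * f)) * Complex.I) := by
      rw [← Complex.exp_add]
      congr 1
      push_cast
      ring
    have e2 : Complex.exp (↑(-2 * π * t * ξ) * Complex.I) *
        Complex.exp (-((4 * π * f * t : ℝ) * Complex.I))
        = Complex.exp (↑(-2 * π * t * (ξ + 2 * f)) * Complex.I) := by
      rw [← Complex.exp_add]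
      congr 1
      push_cast
      ring
    calc Complex.exp (↑(-2 * π * t * ξ) * Complex.I) * (g t *
          ((Complex.exp ((4 * π * f * t : ℝ) * Complex.I)
            + Complex.exp (-((4 * π * f * t : ℝ)) * Complex.I)) / 2))
        = (1/2 : ℂ) * ((Complex.exp (↑(-2 * π * t * ξ) * Complex.I) *
            Complex.exp ((4 * π * f * t : ℝ) * Complex.I)) * g t)
          + (1/2 : ℂ) * ((Complex.exp (↑(-2 * π * t * ξ) * Complex.I) *
            Complex.exp (-((4 * π * f * t : ℝ) * Complex.I))) * g t) := by
          rw [neg_mul]; ring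
      _ = _ := by rw [e1, e2]
  rw [integral_congr_ae (Filter.Eventually.of_forall hpt)]
  rw [integral_add ((hint (ξ - 2 * f)).const_mul _) ((hint (ξ + 2 * f)).const_mul _),
    integral_const_mul, integral_const_mul]
  have F1 : ∫ t : ℝ, Complex.exp (↑(-2 * π * t * (ξ - 2 * f)) * Complex.I) * g t = 0 := by
    have h := hz1
    rw [Real.fourier_real_eq_integral_exp_smul] at h
    simpa [smul_eq_mul] using h
  have F2 : ∫ t : ℝ, Complex.exp (↑(-2 * π * t * (ξ + 2 * f)) * Complex.I) * g t = 0 := by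
    have h := hz2
    rw [Real.fourier_real_eq_integral_exp_smul] at h
    simpa [smul_eq_mul] using h
  rw [F1, F2]
  ring
end

section
/- Let g : ℝ → ℂ be integrable and band-limited to f_g > 0, i.e., 𝓕g(ξ) = 0 for all ξ with |ξ| ≥ f_g. Let f > 0 and f_c > 0 satisfy f_c ≤ 2f − f_g. Then the Fourier transform of the double-carrier-frequency term t ↦ g(t)·sin(4πft) vanishes at every frequency ξ with |ξ| < f_c; consequently this term is completely removed by an ideal low-pass filter with cut-off frequency f_c. -/
open Real MeasureTheory Complex FourierTransform

lemma fourier_shift (g : ℝ → ℂ) (a ξ : ℝ) :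
    FourierTransform.fourier (fun t : ℝ => Complex.exp (2 * π * a * t * Complex.I) * g t) ξ
      = FourierTransform.fourier g (ξ - a) := by
  simp_rw [Real.fourier_real_eq_integral_exp_smul, smul_eq_mul, ← mul_assoc,
    ← Complex.exp_add]
  congr 1
  ext t
  congr 2
  push_cast
  ring

lemma exp_mul_integrable (g : ℝ → ℂ) (hg : Integrable g) (a : ℝ) :
    Integrable (fun t : ℝ => Complex.exp (2 * π * a * t * Complex.I) * g t) := by
  apply hg.bdd_mul (c := 1)
  · apply Continuous.aestronglyMeasurable; continuity
  · refine ae_of_all _ (fun t => le_of_eq ?_)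
    rw [show (2 * (π:ℂ) * a * t * Complex.I) = ((2 * π * a * t : ℝ) : ℂ) * Complex.I by
      push_cast; ring]
    exact Complex.norm_exp_ofReal_mul_I _

lemma fourier_sub (h1 h2 : ℝ → ℂ) (hh1 : Integrable h1) (hh2 : Integrable h2) (ξ : ℝ) :
    FourierTransform.fourier (fun t => h1 t - h2 t) ξ
      = FourierTransform.fourier h1 ξ - FourierTransform.fourier h2 ξ := by
  simp_rw [Real.fourier_eq, smul_sub]
  exact integral_sub ((Real.fourierIntegral_convergent_iff ξ).2 hh1)
    ((Real.fourierIntegral_convergent_iff ξ).2 hh2)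

lemma fourier_const_mul (c : ℂ) (h : ℝ → ℂ) (ξ : ℝ) :
    FourierTransform.fourier (fun t => c * h t) ξ = c * FourierTransform.fourier h ξ := by
  simp_rw [Real.fourier_real_eq_integral_exp_smul, smul_eq_mul]
  rw [← integral_const_mul]
  congr 1; ext t; ring

/-- If `g` is integrable and band-limited to `f_g`, and `f_c ≤ 2f − f_g`, then the
Fourier transform of `t ↦ g(t)·sin(4πft)` vanishes on `(−f_c, f_c)`, so an ideal
low-pass filter with cut-off `f_c` removes this double-carrier-frequency term. -/
theorem fourier_sin_double_carrier_vanishes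
    (g : ℝ → ℂ) (hg : Integrable g)
    (f_g f f_c : ℝ) (hfg : 0 < f_g)
    (hband : ∀ ξ : ℝ, f_g ≤ |ξ| → FourierTransform.fourier g ξ = 0)
    (hf : 0 < f) (hfc : 0 < f_c) (hcut : f_c ≤ 2 * f - f_g) :
    ∀ ξ : ℝ, |ξ| < f_c →
      FourierTransform.fourier (fun t => g t * (Real.sin (4 * π * f * t) : ℂ)) ξ = 0 := by
  intro ξ hξ
  set c : ℂ := 1 / (2 * Complex.I) with hc
  set a : ℝ := 2 * f with ha
  have key : (fun t => g t * (Real.sin (4 * π * f * t) : ℂ))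
      = fun t : ℝ => (c * (Complex.exp (2 * π * (a : ℝ) * t * Complex.I) * g t))
        - (c * (Complex.exp (2 * π * ((-a : ℝ) : ℝ) * t * Complex.I) * g t)) := by
    ext t
    rw [Complex.ofReal_sin, Complex.sin]
    simp only [hc, ha]
    push_cast
    have hI : Complex.I ≠ 0 := Complex.I_ne_zero
    field_simp
    ring_nf
    rw [Complex.I_sq]
    ring
  have h1 : FourierTransform.fourier g (ξ - a) = 0 := by
    apply hband
    have hlt : |ξ| < 2 * f - f_g := lt_of_lt_of_le hξ hcut
    rw [ha]
    rcases abs_cases ξ with ⟨h, _⟩ | ⟨h, _⟩ <;>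
      rcases abs_cases (ξ - 2 * f) with ⟨h2, _⟩ | ⟨h2, _⟩ <;> linarith
  have h2 : FourierTransform.fourier g (ξ - -a) = 0 := by
    apply hband
    have hlt : |ξ| < 2 * f - f_g := lt_of_lt_of_le hξ hcut
    rw [ha]
    rcases abs_cases ξ with ⟨h, _⟩ | ⟨h, _⟩ <;>
      rcases abs_cases (ξ - -(2 * f)) with ⟨h2, _⟩ | ⟨h2, _⟩ <;> linarith
  have hint1 := (exp_mul_integrable g hg a).const_mul c
  have hint2 := (exp_mul_integrable g hg (-a)).const_mul c
  rw [key, fourier_sub _ _ hint1 hint2 ξ,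
    fourier_const_mul, fourier_const_mul, fourier_shift, fourier_shift, h1, h2]
  simp
end

section
/- Let g : ℝ → ℂ be integrable and band-limited to f_g > 0 (𝓕g(ξ) = 0 for |ξ| ≥ f_g), let f > 0, and let f_c satisfy f_g ≤ f_c ≤ 2f − f_g. Fix real a, b, L. Then for every frequency ξ with |ξ| < f_c, the Fourier transform of the mixed signal t ↦ 2·cos(2πft)·(a·g(t−L)·cos(2πf(t−L)) − b·g(t−L)·sin(2πf(t−L))) at ξ equals (a·cos(2πfL) + b·sin(2πfL))·e^{−2πiξL}·𝓕g(ξ). In other words, after ideal low-pass filtering with cut-off f_c, the in-phase demodulation branch recovers exactly the delayed baseband pulse (a·cos(2πfL) + b·sin(2πfL))·g(t−L). -/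
open Real MeasureTheory Complex

lemma qam_integrable_exp_mul {g : ℝ → ℂ} (hg : Integrable g) (c L : ℝ) :
    Integrable (fun t : ℝ => Complex.exp ((2 * π * c * t : ℝ) * Complex.I) * g (t - L)) := by
  refine (hg.comp_sub_right L).bdd_mul (c := 1) ?_ (Filter.Eventually.of_forall fun t => ?_)
  · exact (Complex.continuous_exp.comp (by continuity)).aestronglyMeasurable
  · rw [Complex.norm_exp_ofReal_mul_I]

lemma qam_fourier_exp_mul_shift (g : ℝ → ℂ) (c L ξ : ℝ) :
    FourierTransform.fourier
        (fun t => Complex.exp ((2 * π * c * t : ℝ) * Complex.I) * g (t - L)) ξ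
      = Complex.exp ((-(2 * π * (ξ - c) * L) : ℝ) * Complex.I)
        * FourierTransform.fourier g (ξ - c) := by
  rw [Real.fourier_real_eq_integral_exp_smul,
      Real.fourier_real_eq_integral_exp_smul]
  rw [← MeasureTheory.integral_add_right_eq_self
        (fun v : ℝ => Complex.exp ((-2 * π * v * ξ : ℝ) * Complex.I) •
          (Complex.exp ((2 * π * c * v : ℝ) * Complex.I) * g (v - L))) L]
  rw [← MeasureTheory.integral_const_mul]
  congr 1; funext v
  simp only [smul_eq_mul, add_sub_cancel_right, ← mul_assoc]
  rw [← Complex.exp_add, ← Complex.exp_add]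
  congr 2
  push_cast
  ring

lemma qam_fourier_add_point {f1 f2 : ℝ → ℂ} (h1 : Integrable f1) (h2 : Integrable f2) (ξ : ℝ) :
    FourierTransform.fourier (fun t => f1 t + f2 t) ξ
      = FourierTransform.fourier f1 ξ + FourierTransform.fourier f2 ξ := by
  simp only [Real.fourier_real_eq_integral_exp_smul, smul_eq_mul, mul_add]
  refine MeasureTheory.integral_add ?_ ?_
  all_goals
    refine Integrable.bdd_mul (c := 1) (by assumption) ?_ (Filter.Eventually.of_forall fun t => ?_)
    · exact (Complex.continuous_exp.comp (by continuity)).aestronglyMeasurable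
    · rw [Complex.norm_exp_ofReal_mul_I]

lemma qam_fourier_const_mul (f1 : ℝ → ℂ) (r : ℂ) (ξ : ℝ) :
    FourierTransform.fourier (fun t => r * f1 t) ξ = r * FourierTransform.fourier f1 ξ := by
  simp only [Real.fourier_real_eq_integral_exp_smul, smul_eq_mul, mul_left_comm _ r,
    MeasureTheory.integral_const_mul]

lemma qam_pointwise (z : ℂ) (f L a b t : ℝ) :
    2 * (Real.cos (2 * π * f * t) : ℂ) *
        ((a : ℂ) * z * (Real.cos (2 * π * f * (t - L)) : ℂ)
          - (b : ℂ) * z * (Real.sin (2 * π * f * (t - L)) : ℂ))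
    = ((a * Real.cos (2 * π * f * L) + b * Real.sin (2 * π * f * L) : ℝ) : ℂ)
        * (Complex.exp ((2 * π * 0 * t : ℝ) * Complex.I) * z)
      + (((a : ℂ) + b * Complex.I) / 2 * Complex.exp (-((2 * π * f * L : ℝ) : ℂ) * Complex.I))
        * (Complex.exp ((2 * π * (2 * f) * t : ℝ) * Complex.I) * z)
      + (((a : ℂ) - b * Complex.I) / 2 * Complex.exp (((2 * π * f * L : ℝ) : ℂ) * Complex.I))
        * (Complex.exp ((2 * π * (-(2 * f)) * t : ℝ) * Complex.I) * z) := by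
  have hθδ : 2 * π * f * (t - L) = 2 * π * f * t - 2 * π * f * L := by ring
  have h2θ : 2 * π * (2 * f) * t = 2 * π * f * t + 2 * π * f * t := by ring
  have hm2θ : 2 * π * (-(2 * f)) * t = -(2 * π * f * t + 2 * π * f * t) := by ring
  have h0 : 2 * π * 0 * t = (0 : ℝ) := by ring
  rw [hθδ, h2θ, hm2θ, h0]
  set θ : ℝ := 2 * π * f * t with hθ
  set δ : ℝ := 2 * π * f * L with hδ
  push_cast
  set u : ℂ := Complex.exp ((θ : ℂ) * Complex.I) with hu
  set u' : ℂ := Complex.exp (-(θ : ℂ) * Complex.I) with hu'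
  set v : ℂ := Complex.exp ((δ : ℂ) * Complex.I) with hv
  set v' : ℂ := Complex.exp (-(δ : ℂ) * Complex.I) with hv'
  have huu' : u * u' = 1 := by
    rw [hu, hu', ← Complex.exp_add]; ring_nf; exact Complex.exp_zero
  have ecθ : Complex.cos (θ : ℂ) = (u + u') / 2 := by rw [Complex.cos]
  have ecL : Complex.cos (δ : ℂ) = (v + v') / 2 := by rw [Complex.cos]
  have esL : Complex.sin (δ : ℂ) = (v' - v) * Complex.I / 2 := by rw [Complex.sin]
  have ecd : Complex.cos ((θ : ℂ) - (δ : ℂ)) = (u * v' + u' * v) / 2 := by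
    rw [Complex.cos,
      show ((θ : ℂ) - (δ : ℂ)) * Complex.I = (θ : ℂ) * Complex.I + -(δ : ℂ) * Complex.I by ring,
      show -((θ : ℂ) - (δ : ℂ)) * Complex.I = -(θ : ℂ) * Complex.I + (δ : ℂ) * Complex.I by ring,
      Complex.exp_add, Complex.exp_add, ← hu, ← hu', ← hv, ← hv']
  have esd : Complex.sin ((θ : ℂ) - (δ : ℂ)) = (u' * v - u * v') * Complex.I / 2 := by
    rw [Complex.sin,
      show ((θ : ℂ) - (δ : ℂ)) * Complex.I = (θ : ℂ) * Complex.I + -(δ : ℂ) * Complex.I by ring,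
      show -((θ : ℂ) - (δ : ℂ)) * Complex.I = -(θ : ℂ) * Complex.I + (δ : ℂ) * Complex.I by ring,
      Complex.exp_add, Complex.exp_add, ← hu, ← hu', ← hv, ← hv']
  have e0 : Complex.exp ((0 : ℂ) * Complex.I) = 1 := by rw [zero_mul, Complex.exp_zero]
  have e2 : Complex.exp (((θ : ℂ) + (θ : ℂ)) * Complex.I) = u * u := by
    rw [add_mul, Complex.exp_add, ← hu]
  have em2 : Complex.exp (-((θ : ℂ) + (θ : ℂ)) * Complex.I) = u' * u' := by
    rw [show -((θ : ℂ) + (θ : ℂ)) * Complex.I = -(θ : ℂ) * Complex.I + -(θ : ℂ) * Complex.I by ring,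
      Complex.exp_add, ← hu']
  rw [ecθ, ecd, esd, ecL, esL, e0, e2, em2]
  linear_combination (z / 2 * ((a : ℂ) * (v + v') - (b : ℂ) * Complex.I * (v - v'))) * huu'

/-- In-phase demodulation branch: for `g` integrable and band-limited to `f_g`,
with `f_g ≤ f_c ≤ 2f − f_g`, the Fourier transform of the mixed signal
`t ↦ 2·cos(2πft)·(a·g(t−L)·cos(2πf(t−L)) − b·g(t−L)·sin(2πf(t−L)))` at any
frequency `|ξ| < f_c` equals `(a·cos(2πfL) + b·sin(2πfL))·e^{−2πiξL}·𝓕g(ξ)`;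
i.e. after ideal low-pass filtering with cut-off `f_c` the branch recovers the
delayed baseband pulse `(a·cos(2πfL) + b·sin(2πfL))·g(t−L)`. -/
theorem inphase_demodulation_recovers_baseband
    (g : ℝ → ℂ) (hg : Integrable g)
    (f_g f f_c : ℝ) (hfg : 0 < f_g)
    (hband : ∀ ξ : ℝ, f_g ≤ |ξ| → FourierTransform.fourier g ξ = 0)
    (hf : 0 < f) (hfc_lo : f_g ≤ f_c) (hfc_hi : f_c ≤ 2 * f - f_g)
    (a b L : ℝ) :
    ∀ ξ : ℝ, |ξ| < f_c →
      FourierTransform.fourier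
        (fun t => 2 * (Real.cos (2 * π * f * t) : ℂ) *
          ((a : ℂ) * g (t - L) * (Real.cos (2 * π * f * (t - L)) : ℂ)
            - (b : ℂ) * g (t - L) * (Real.sin (2 * π * f * (t - L)) : ℂ))) ξ =
      ((a * Real.cos (2 * π * f * L) + b * Real.sin (2 * π * f * L) : ℝ) : ℂ)
        * Complex.exp (-2 * π * Complex.I * (ξ : ℂ) * (L : ℂ))
        * FourierTransform.fourier g ξ := by
  intro ξ hξ
  have hband1 : FourierTransform.fourier g (ξ - 2 * f) = 0 := by
    refine hband _ ?_
    have h1 := neg_le_abs (ξ - 2 * f)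
    have h2 := le_abs_self ξ
    linarith
  have hband2 : FourierTransform.fourier g (ξ - -(2 * f)) = 0 := by
    refine hband _ ?_
    have h1 := le_abs_self (ξ - -(2 * f))
    have h2 := neg_abs_le ξ
    linarith
  have hfun : (fun t => 2 * (Real.cos (2 * π * f * t) : ℂ) *
          ((a : ℂ) * g (t - L) * (Real.cos (2 * π * f * (t - L)) : ℂ)
            - (b : ℂ) * g (t - L) * (Real.sin (2 * π * f * (t - L)) : ℂ)))
      = fun t =>
        (((a * Real.cos (2 * π * f * L) + b * Real.sin (2 * π * f * L) : ℝ) : ℂ)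
            * (Complex.exp ((2 * π * 0 * t : ℝ) * Complex.I) * g (t - L))
          + (((a : ℂ) + b * Complex.I) / 2
              * Complex.exp (-((2 * π * f * L : ℝ) : ℂ) * Complex.I))
            * (Complex.exp ((2 * π * (2 * f) * t : ℝ) * Complex.I) * g (t - L)))
        + (((a : ℂ) - b * Complex.I) / 2
              * Complex.exp (((2 * π * f * L : ℝ) : ℂ) * Complex.I))
            * (Complex.exp ((2 * π * (-(2 * f)) * t : ℝ) * Complex.I) * g (t - L)) :=
    funext fun t => qam_pointwise (g (t - L)) f L a b t
  have hA : Integrable (fun t : ℝ =>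
      ((a * Real.cos (2 * π * f * L) + b * Real.sin (2 * π * f * L) : ℝ) : ℂ)
        * (Complex.exp ((2 * π * 0 * t : ℝ) * Complex.I) * g (t - L))) :=
    (qam_integrable_exp_mul hg 0 L).const_mul _
  have hB : Integrable (fun t : ℝ =>
      (((a : ℂ) + b * Complex.I) / 2 * Complex.exp (-((2 * π * f * L : ℝ) : ℂ) * Complex.I))
        * (Complex.exp ((2 * π * (2 * f) * t : ℝ) * Complex.I) * g (t - L))) :=
    (qam_integrable_exp_mul hg (2 * f) L).const_mul _
  have hC : Integrable (fun t : ℝ =>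
      (((a : ℂ) - b * Complex.I) / 2 * Complex.exp (((2 * π * f * L : ℝ) : ℂ) * Complex.I))
        * (Complex.exp ((2 * π * (-(2 * f)) * t : ℝ) * Complex.I) * g (t - L))) :=
    (qam_integrable_exp_mul hg (-(2 * f)) L).const_mul _
  have hAB : Integrable (fun t : ℝ =>
      ((a * Real.cos (2 * π * f * L) + b * Real.sin (2 * π * f * L) : ℝ) : ℂ)
        * (Complex.exp ((2 * π * 0 * t : ℝ) * Complex.I) * g (t - L))
      + (((a : ℂ) + b * Complex.I) / 2 * Complex.exp (-((2 * π * f * L : ℝ) : ℂ) * Complex.I))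
        * (Complex.exp ((2 * π * (2 * f) * t : ℝ) * Complex.I) * g (t - L))) := hA.add hB
  rw [hfun, qam_fourier_add_point hAB hC, qam_fourier_add_point hA hB,
    qam_fourier_const_mul, qam_fourier_const_mul, qam_fourier_const_mul,
    qam_fourier_exp_mul_shift, qam_fourier_exp_mul_shift, qam_fourier_exp_mul_shift,
    hband1, hband2, sub_zero]
  rw [show ((-(2 * π * ξ * L) : ℝ) : ℂ) * Complex.I
      = -2 * π * Complex.I * (ξ : ℂ) * (L : ℂ) by push_cast; ring]
  ring
end

section
/- Let g : ℝ → ℂ be integrable and band-limited to f_g > 0 (𝓕g(ξ) = 0 for |ξ| ≥ f_g), let f > 0, and let f_c satisfy f_g ≤ f_c ≤ 2f − f_g. Fix real a, b, L. Then for every frequency ξ with |ξ| < f_c, the Fourier transform of the mixed signal t ↦ −2·sin(2πft)·(a·g(t−L)·cos(2πf(t−L)) − b·g(t−L)·sin(2πf(t−L))) at ξ equals (−a·sin(2πfL) + b·cos(2πfL))·e^{−2πiξL}·𝓕g(ξ). In other words, after ideal low-pass filtering with cut-off f_c, the quadrature demodulation branch recovers exactly the delayed baseband pulse (−a·sin(2πfL)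 + b·cos(2πfL))·g(t−L). -/
open Real MeasureTheory Complex FourierTransform

-- modulation
lemma ftMod (k : ℝ → ℂ) (c ξ : ℝ) :
    FourierTransform.fourier (fun t => Complex.exp ((2 * π * c * t : ℝ) * Complex.I) * k t) ξ =
      FourierTransform.fourier k (ξ - c) := by
  simp_rw [Real.fourier_real_eq_integral_exp_smul, smul_eq_mul, ← mul_assoc,
    ← Complex.exp_add]
  congr 1 with t
  congr 2
  push_cast
  ring

-- translation
lemma ftTrans (k : ℝ → ℂ) (hk : Integrable k) (L ξ : ℝ) :
    FourierTransform.fourier (fun t => k (t - L)) ξ =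
      Complex.exp (-2 * π * Complex.I * (ξ : ℂ) * (L : ℂ)) * FourierTransform.fourier k ξ := by
  rw [Real.fourier_real_eq_integral_exp_smul,
    Real.fourier_real_eq_integral_exp_smul, ← integral_const_mul,
    ← integral_add_right_eq_self
      (fun t => Complex.exp ((-2 * π * t * ξ : ℝ) * Complex.I) • k (t - L)) L]
  congr 1 with t
  simp only [add_sub_cancel_right, smul_eq_mul, ← mul_assoc, ← Complex.exp_add]
  congr 2
  push_cast
  ring

-- pointwise algebraic identity
lemma keypt (x y a b : ℝ) (z : ℂ) :
    -2 * (Real.sin x : ℂ) * ((a : ℂ) * z * (Real.cos (x - y) : ℂ)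
        - (b : ℂ) * z * (Real.sin (x - y) : ℂ)) =
      ((-a * Real.sin y + b * Real.cos y : ℝ) : ℂ) * z
      + (((a : ℂ) * Complex.I / 2 - (b : ℂ) / 2) *
          ((Real.cos y : ℂ) - Complex.I * (Real.sin y : ℂ))) *
          (Complex.exp ((2 * x : ℝ) * Complex.I) * z)
      + ((-(a : ℂ) * Complex.I / 2 - (b : ℂ) / 2) *
          ((Real.cos y : ℂ) + Complex.I * (Real.sin y : ℂ))) *
          (Complex.exp ((-(2 * x) : ℝ) * Complex.I) * z) := by
  rw [Real.cos_sub, Real.sin_sub]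
  push_cast
  have hp : Complex.sin x ^ 2 + Complex.cos x ^ 2 = 1 := Complex.sin_sq_add_cos_sq _
  have e1 : Complex.exp (2 * (x : ℂ) * Complex.I) =
      (Complex.cos x + Complex.sin x * Complex.I) ^ 2 := by
    rw [show 2 * (x : ℂ) * Complex.I = (x : ℂ) * Complex.I + (x : ℂ) * Complex.I by ring,
      Complex.exp_add, Complex.exp_mul_I]; ring
  have e2 : Complex.exp (-(2 * (x : ℂ)) * Complex.I) =
      (Complex.cos x - Complex.sin x * Complex.I) ^ 2 := by
    rw [show -(2 * (x : ℂ)) * Complex.I = (-(x : ℂ)) * Complex.I + (-(x : ℂ)) * Complex.I by ring,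
      Complex.exp_add, Complex.exp_mul_I, Complex.cos_neg, Complex.sin_neg]; ring
  rw [e1, e2]
  set cu := Complex.cos (x : ℂ); set su := Complex.sin (x : ℂ)
  set cv := Complex.cos (y : ℂ); set sv := Complex.sin (y : ℂ)
  linear_combination ((a : ℂ) * Complex.I ^ 2 * su ^ 2 * sv - 2 * a * cu * su * cv
      + a * cu ^ 2 * sv + b * su ^ 2 * cv - 2 * b * cu * su * sv - a * su ^ 2 * sv) * z *
      Complex.I_sq
    + ((b : ℂ) * cv - a * sv) * z * hp


/-- Quadrature demodulation branch: for `g` integrable and band-limited to `f_g`,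
with `f_g ≤ f_c ≤ 2f − f_g`, the Fourier transform of the mixed signal
`t ↦ −2·sin(2πft)·(a·g(t−L)·cos(2πf(t−L)) − b·g(t−L)·sin(2πf(t−L)))` at any
frequency `|ξ| < f_c` equals `(−a·sin(2πfL) + b·cos(2πfL))·e^{−2πiξL}·𝓕g(ξ)`;
i.e. after ideal low-pass filtering with cut-off `f_c` the branch recovers the
delayed baseband pulse `(−a·sin(2πfL) + b·cos(2πfL))·g(t−L)`. -/
theorem quadrature_demodulation_recovers_baseband
    (g : ℝ → ℂ) (hg : Integrable g)
    (f_g f f_c : ℝ) (hfg : 0 < f_g)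
    (hband : ∀ ξ : ℝ, f_g ≤ |ξ| → FourierTransform.fourier g ξ = 0)
    (hf : 0 < f) (hfc_lo : f_g ≤ f_c) (hfc_hi : f_c ≤ 2 * f - f_g)
    (a b L : ℝ) :
    ∀ ξ : ℝ, |ξ| < f_c →
      FourierTransform.fourier
        (fun t => -2 * (Real.sin (2 * π * f * t) : ℂ) *
          ((a : ℂ) * g (t - L) * (Real.cos (2 * π * f * (t - L)) : ℂ)
            - (b : ℂ) * g (t - L) * (Real.sin (2 * π * f * (t - L)) : ℂ))) ξ =
      ((-a * Real.sin (2 * π * f * L) + b * Real.cos (2 * π * f * L) : ℝ) : ℂ)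
        * Complex.exp (-2 * π * Complex.I * (ξ : ℂ) * (L : ℂ))
        * FourierTransform.fourier g ξ := by
  intro ξ hξ
  have hh : Integrable (fun t => g (t - L)) := hg.comp_sub_right L
  set h : ℝ → ℂ := fun t => g (t - L) with hdefh
  have hFh : ∀ η : ℝ, FourierTransform.fourier h η =
      Complex.exp (-2 * π * Complex.I * (η : ℂ) * (L : ℂ)) * FourierTransform.fourier g η :=
    fun η => ftTrans g hg L η
  have hFh0 : ∀ η : ℝ, f_g ≤ |η| → FourierTransform.fourier h η = 0 := fun η hη => by
    rw [hFh, hband η hη, mul_zero]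
  set C : ℂ := ((-a * Real.sin (2 * π * f * L) + b * Real.cos (2 * π * f * L) : ℝ) : ℂ) with hC
  set A : ℂ := ((a : ℂ) * Complex.I / 2 - (b : ℂ) / 2) *
      ((Real.cos (2 * π * f * L) : ℂ) - Complex.I * (Real.sin (2 * π * f * L) : ℂ)) with hA
  set B : ℂ := (-(a : ℂ) * Complex.I / 2 - (b : ℂ) / 2) *
      ((Real.cos (2 * π * f * L) : ℂ) + Complex.I * (Real.sin (2 * π * f * L) : ℂ)) with hB
  set M₁ : ℝ → ℂ := fun t => Complex.exp ((2 * π * (2 * f) * t : ℝ) * Complex.I) * h t with hM₁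
  set M₂ : ℝ → ℂ := fun t => Complex.exp ((2 * π * (-(2 * f)) * t : ℝ) * Complex.I) * h t with hM₂
  have hmi : ∀ c : ℝ, Integrable (fun t => Complex.exp ((2 * π * c * t : ℝ) * Complex.I) * h t) := by
    intro c
    refine hh.bdd_mul (c := 1) ?_ (Filter.Eventually.of_forall fun t => ?_)
    · exact (Complex.continuous_exp.comp
        ((Complex.continuous_ofReal.comp (continuous_const.mul continuous_id)).mul
          continuous_const)).aestronglyMeasurable
    · rw [Complex.norm_exp_ofReal_mul_I]
  have hM₁i : Integrable M₁ := hmi (2 * f)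
  have hM₂i : Integrable M₂ := hmi (-(2 * f))
  have hadd : ∀ (u v : ℝ → ℂ), Integrable u → Integrable v →
      FourierTransform.fourier (u + v) ξ = FourierTransform.fourier u ξ + FourierTransform.fourier v ξ := by
    intro u v hu hv
    exact congrFun (VectorFourier.fourierIntegral_add Real.continuous_fourierChar
      continuous_inner hu hv) ξ
  have hsmul : ∀ (r : ℂ) (u : ℝ → ℂ),
      FourierTransform.fourier (r • u) ξ = r * FourierTransform.fourier u ξ := by
    intro r u
    have := congrFun (VectorFourier.fourierIntegral_const_smul 𝐞 volume (innerₗ ℝ) u r) ξ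
    simp only [Pi.smul_apply, smul_eq_mul] at this
    exact this
  have hdec : (fun t => -2 * (Real.sin (2 * π * f * t) : ℂ) *
          ((a : ℂ) * g (t - L) * (Real.cos (2 * π * f * (t - L)) : ℂ)
            - (b : ℂ) * g (t - L) * (Real.sin (2 * π * f * (t - L)) : ℂ)))
      = C • h + (A • M₁ + B • M₂) := by
    funext t
    simp only [Pi.add_apply, Pi.smul_apply, smul_eq_mul, hM₁, hM₂]
    rw [show 2 * π * f * (t - L) = 2 * π * f * t - 2 * π * f * L from by ring,
      show (2 * π * (2 * f) * t : ℝ) = 2 * (2 * π * f * t) from by ring,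
      show (2 * π * (-(2 * f)) * t : ℝ) = -(2 * (2 * π * f * t)) from by ring,
      ← add_assoc]
    exact keypt (2 * π * f * t) (2 * π * f * L) a b (h t)
  rw [hdec, hadd _ _ (hh.smul C) ((hM₁i.smul A).add (hM₂i.smul B)),
    hadd _ _ (hM₁i.smul A) (hM₂i.smul B), hsmul, hsmul, hsmul, hM₁, hM₂,
    ftMod h (2 * f) ξ, ftMod h (-(2 * f)) ξ]
  have h1 : FourierTransform.fourier h (ξ - 2 * f) = 0 := by
    refine hFh0 _ ?_
    nlinarith [neg_le_abs (ξ - 2 * f), le_abs_self ξ]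
  have h2 : FourierTransform.fourier h (ξ - -(2 * f)) = 0 := by
    refine hFh0 _ ?_
    nlinarith [le_abs_self (ξ - -(2 * f)), neg_abs_le ξ]
  rw [h1, h2, hFh ξ]
  ring
end

section
/- Let f be real, r > 0, a₁, a₂ real with α = a₁a₂r, and for i = 1,…,M let r_i ≥ 0, L_i real, α_i = a₁a₂r_i. Let ε > 0 and set w₂ := Σ_{i=1}^{M} r_i/r + ε. Define Δ(ω) := w₂⁻¹ · Σ_{i=1}^{M} (r_i/r)·e^{−i(L_i−L)ω}·A(2πf(L_i−L)). Then (1) for every real ω, the perturbed coupling-path frequency response factors multiplicatively: α·e^{−iLω}·A(2πfL) + Σ_{i=1}^{M} α_i·e^{−iL_iω}·A(2πfL_i) = α·e^{−iLω}·A(2πfL) * ( I + w₂·Δ(ω) ); and (2) for every real ω, the maximum singular value (ℓ²→ℓ² operator norm) of Δ(ω) is at most (Σ_{i=1}^{M} r_i/r)/(Σ_{i=1}^{M} r_i/r + ε), which is strictly less than 1. Hence the perturbed path lies in the multiplicative uncertainty set { α·e^{−iLω}·A(2πfL)·(I + Δ(ω)·W₂) : sup_ω σ̄(Δ(ω)) <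 1 } with weighting W₂ = w₂·I. -/
open Real Matrix Finset

/-- The 2×2 clockwise rotation matrix `A(φ)`, regarded as a complex matrix. -/
noncomputable def rotAC (φ : ℝ) : Matrix (Fin 2) (Fin 2) ℂ :=
  !![(Real.cos φ : ℂ), (Real.sin φ : ℂ); (-(Real.sin φ) : ℂ), (Real.cos φ : ℂ)]

lemma rot_mul (a b : ℝ) : rotAC a * rotAC b = rotAC (a + b) := by
  simp only [rotAC, Matrix.mul_fin_two]
  push_cast [Real.cos_add, Real.sin_add]
  congr 1 <;> ring_nf

lemma rot_zero : rotAC 0 = 1 := by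
  ext i j; fin_cases i <;> fin_cases j <;> simp [rotAC]

lemma rot_star (a : ℝ) : star (rotAC a) = rotAC (-a) := by
  ext i j
  fin_cases i <;> fin_cases j <;>
    simp [rotAC, Matrix.conjTranspose_apply, Complex.conj_ofReal,
      -Complex.ofReal_cos, -Complex.ofReal_sin]

lemma rot_unitary (a : ℝ) : rotAC a ∈ unitary (Matrix (Fin 2) (Fin 2) ℂ) := by
  constructor <;> rw [rot_star, rot_mul] <;> simp [rot_zero]

open scoped Matrix.Norms.L2Operator in
lemma norm_rot (a : ℝ) : ‖rotAC a‖ = 1 :=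
  CStarRing.norm_of_mem_unitary (rot_unitary a)

lemma norm_exp_neg_mul_I (x : ℝ) : ‖Complex.exp (-(x : ℂ) * Complex.I)‖ = 1 := by
  rw [show (-(x : ℂ)) = ((-x : ℝ) : ℂ) by push_cast; ring]
  exact Complex.norm_exp_ofReal_mul_I _

open scoped Matrix.Norms.L2Operator

set_option synthInstance.maxHeartbeats 800000
set_option maxHeartbeats 1600000

/-- The unknown multipath lies in the multiplicative uncertainty set with scalar
weight `w₂ = Σᵢ rᵢ/r + ε`: with
`Δ(ω) = w₂⁻¹ · Σᵢ (rᵢ/r)·e^{−i(Lᵢ−L)ω}·A(2πf(Lᵢ−L))`,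
(1) the perturbed coupling-path frequency response factors as
`α·e^{−iLω}·A(2πfL) + Σᵢ αᵢ·e^{−iLᵢω}·A(2πfLᵢ)
  = α·e^{−iLω}·A(2πfL) * (I + w₂·Δ(ω))`, and
(2) `σ̄(Δ(ω)) ≤ (Σᵢ rᵢ/r)/(Σᵢ rᵢ/r + ε) < 1` for every `ω`. -/
theorem multiplicative_uncertainty_model
    (f L r a₁ a₂ α : ℝ) (hr : 0 < r) (hα : α = a₁ * a₂ * r)
    (M : ℕ) (ri Li : Fin M → ℝ) (hri : ∀ i, 0 ≤ ri i)
    (αi : Fin M → ℝ) (hαi : ∀ i, αi i = a₁ * a₂ * ri i)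
    (ε : ℝ) (hε : 0 < ε)
    (w₂ : ℝ) (hw₂ : w₂ = (∑ i : Fin M, ri i / r) + ε)
    (Δ : ℝ → Matrix (Fin 2) (Fin 2) ℂ)
    (hΔ : ∀ ω : ℝ, Δ ω =
      ((w₂⁻¹ : ℝ) : ℂ) •
        ∑ i : Fin M,
          ((ri i / r : ℝ) : ℂ) • Complex.exp (-(((Li i - L) * ω : ℝ) : ℂ) * Complex.I) •
            rotAC (2 * π * f * (Li i - L))) :
    (∀ ω : ℝ,
      (α : ℂ) • Complex.exp (-((L * ω : ℝ) : ℂ) * Complex.I) • rotAC (2 * π * f * L)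
        + ∑ i : Fin M,
            (αi i : ℂ) • Complex.exp (-((Li i * ω : ℝ) : ℂ) * Complex.I) • rotAC (2 * π * f * Li i)
      = ((α : ℂ) • Complex.exp (-((L * ω : ℝ) : ℂ) * Complex.I) • rotAC (2 * π * f * L)) *
          (1 + ((w₂ : ℝ) : ℂ) • Δ ω)) ∧
    (∀ ω : ℝ,
      ‖Matrix.toEuclideanCLM (𝕜 := ℂ) (Δ ω)‖
        ≤ (∑ i : Fin M, ri i / r) / ((∑ i : Fin M, ri i / r) + ε)) ∧
    (∑ i : Fin M, ri i / r) / ((∑ i : Fin M, ri i / r) + ε) < 1 := by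
  set S : ℝ := ∑ i : Fin M, ri i / r with hS
  have hS0 : 0 ≤ S := Finset.sum_nonneg fun i _ => div_nonneg (hri i) hr.le
  have hw₂pos : 0 < w₂ := by rw [hw₂]; positivity
  refine ⟨?_, ?_, ?_⟩
  · intro ω
    have hinv : ((w₂ : ℝ) : ℂ) • Δ ω =
        ∑ i : Fin M,
          ((ri i / r : ℝ) : ℂ) • Complex.exp (-(((Li i - L) * ω : ℝ) : ℂ) * Complex.I) •
            rotAC (2 * π * f * (Li i - L)) := by
      rw [hΔ ω, smul_smul, ← Complex.ofReal_mul, mul_inv_cancel₀ hw₂pos.ne', Complex.ofReal_one,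
        one_smul]
    rw [mul_add, mul_one, hinv, Finset.mul_sum]
    congr 1
    refine Eq.symm (Finset.sum_congr rfl fun i _ => ?_)
    have hrot : rotAC (2 * π * f * L) * rotAC (2 * π * f * (Li i - L))
        = rotAC (2 * π * f * Li i) := by
      rw [rot_mul]; ring_nf
    have hexp : Complex.exp (-((L * ω : ℝ) : ℂ) * Complex.I) *
        Complex.exp (-(((Li i - L) * ω : ℝ) : ℂ) * Complex.I)
        = Complex.exp (-((Li i * ω : ℝ) : ℂ) * Complex.I) := by
      rw [← Complex.exp_add]; congr 1; push_cast; ring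
    have hc : (α : ℂ) * ((ri i / r : ℝ) : ℂ) = (αi i : ℂ) := by
      rw [← Complex.ofReal_mul]
      congr 1
      rw [hα, hαi]
      field_simp
    calc ((α : ℂ) • Complex.exp (-((L * ω : ℝ) : ℂ) * Complex.I) • rotAC (2 * π * f * L)) *
          (((ri i / r : ℝ) : ℂ) • Complex.exp (-(((Li i - L) * ω : ℝ) : ℂ) * Complex.I) •
            rotAC (2 * π * f * (Li i - L)))
        = ((α : ℂ) * ((ri i / r : ℝ) : ℂ) *
            (Complex.exp (-((L * ω : ℝ) : ℂ) * Complex.I) *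
              Complex.exp (-(((Li i - L) * ω : ℝ) : ℂ) * Complex.I))) •
            (rotAC (2 * π * f * L) * rotAC (2 * π * f * (Li i - L))) := by
          simp only [smul_mul_assoc, mul_smul_comm, smul_smul]; ring_nf
      _ = (αi i : ℂ) • Complex.exp (-((Li i * ω : ℝ) : ℂ) * Complex.I) •
            rotAC (2 * π * f * Li i) := by
          rw [hrot, hexp, hc, smul_smul]
  · intro ω
    rw [← Matrix.cstar_norm_def, hΔ ω, norm_smul]
    have hterm : ∀ i : Fin M,
        ‖((ri i / r : ℝ) : ℂ) • Complex.exp (-(((Li i - L) * ω : ℝ) : ℂ) * Complex.I) •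
            rotAC (2 * π * f * (Li i - L))‖ = ri i / r := by
      intro i
      rw [norm_smul, norm_smul, norm_rot, norm_exp_neg_mul_I, Complex.norm_real]
      simp [abs_of_nonneg (div_nonneg (hri i) hr.le), abs_of_nonneg (hri i), abs_of_nonneg hr.le]
    have h1 := norm_sum_le Finset.univ (fun i : Fin M =>
      ((ri i / r : ℝ) : ℂ) • Complex.exp (-(((Li i - L) * ω : ℝ) : ℂ) * Complex.I) •
        rotAC (2 * π * f * (Li i - L)))
    rw [Finset.sum_congr rfl fun i _ => hterm i] at h1
    have h2 : ‖((w₂⁻¹ : ℝ) : ℂ)‖ = w₂⁻¹ := by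
      rw [Complex.norm_real, Real.norm_eq_abs, abs_of_nonneg (inv_nonneg.2 hw₂pos.le)]
    rw [h2]
    calc w₂⁻¹ * ‖∑ i : Fin M,
            ((ri i / r : ℝ) : ℂ) • Complex.exp (-(((Li i - L) * ω : ℝ) : ℂ) * Complex.I) •
              rotAC (2 * π * f * (Li i - L))‖
        ≤ w₂⁻¹ * S := mul_le_mul_of_nonneg_left h1 (inv_nonneg.2 hw₂pos.le)
      _ = S / (S + ε) := by rw [hw₂, inv_mul_eq_div]
  · rw [div_lt_one (by positivity)]
    exact lt_add_of_pos_right _ hε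
end
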